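/- For any fixed 0 < δ < 1 and 1 < L < 2^{(1-δ)/2}, the set E(L) of α ∈ [0,1) such that (log q_{m+1})/q_m ≥ L^{-m} for infinitely many m ∈ ℕ has Lebesgue measure zero, where q_m are the continued fraction convergent denominators of α. -/

import Mathlib

open Real MeasureTheory

namespace ExcAux

open GenContFract

/-- Integer-valued continuants for the continued fraction of a real number. -/
theorem exists_int_pair_contsAux (v : ℝ) (n : ℕ) :
    ∃ conts : GenContFract.Pair ℤ,
      (GenContFract.of v).contsAux n = conts.map ((↑) : ℤ → ℝ) :=
  Nat.strong_induction_on n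
    (by
      clear n
      let g := GenContFract.of v
      intro n IH
      rcases n with (_ | _ | n)
      · exact ⟨Pair.mk 1 0, by simp [contsAux, Pair.map]⟩
      · exact ⟨Pair.mk ⌊v⌋ 1, by simp [contsAux, Pair.map, of_h_eq_floor, g]⟩
      · obtain ⟨pred_conts, pred_conts_eq⟩ := IH (n + 1) <| lt_add_one (n + 1)
        rcases s_ppred_nth_eq : g.s.get? n with gp_n | gp_n
        · use pred_conts
          have : g.contsAux (n + 2) = g.contsAux (n + 1) :=
            contsAux_stable_of_terminated (n + 1).le_succ s_ppred_nth_eq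
          exact this.trans pred_conts_eq
        · obtain ⟨⟨pa, pb⟩, ppred_conts_eq⟩ :=
            IH n <| lt_of_le_of_lt n.le_succ <| lt_add_one <| n + 1
          obtain ⟨a_eq_one, z, b_eq_z⟩ : gp_n.a = 1 ∧ ∃ z : ℤ, gp_n.b = (z : ℝ) :=
            of_partNum_eq_one_and_exists_int_partDen_eq s_ppred_nth_eq
          refine ⟨⟨z * pred_conts.a + pa, z * pred_conts.b + pb⟩, ?_⟩
          refine (contsAux_recurrence s_ppred_nth_eq ppred_conts_eq pred_conts_eq).trans ?_
          simp only [a_eq_one, b_eq_z]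
          obtain ⟨ca, cb⟩ := pred_conts
          simp only [GenContFract.nextConts, GenContFract.nextNum, GenContFract.nextDen, Pair.map]
          norm_num)

/-- `√2 ^ m ≤ √2 * fib (m+1)`. -/
theorem sqrt_two_pow_le_fib (m : ℕ) :
    Real.sqrt 2 ^ m ≤ Real.sqrt 2 * (Nat.fib (m + 1) : ℝ) := by
  induction m using Nat.strong_induction_on with
  | _ m IH =>
    match m with
    | 0 => simpa using Real.one_le_sqrt.mpr (by norm_num)
    | 1 => simp
    | (k + 2) =>
      have h1 := IH k (by omega)
      have hs : Real.sqrt 2 ^ (k + 2) = 2 * Real.sqrt 2 ^ k := by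
        rw [pow_add, mul_comm]
        norm_num [Real.sq_sqrt]
      have hfib : (2 : ℝ) * (Nat.fib (k + 1) : ℝ) ≤ (Nat.fib (k + 3) : ℝ) := by
        have : Nat.fib (k + 3) = Nat.fib (k + 1) + Nat.fib (k + 2) := by
          rw [Nat.fib_add_two]
        have hmono : Nat.fib (k + 1) ≤ Nat.fib (k + 2) := Nat.fib_le_fib_succ
        have hmono' : (Nat.fib (k+1) : ℝ) ≤ (Nat.fib (k+2) : ℝ) := by exact_mod_cast hmono
        push_cast [this]
        linarith
      have hsqrt : (0 : ℝ) ≤ Real.sqrt 2 := Real.sqrt_nonneg 2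
      calc Real.sqrt 2 ^ (k + 2) = 2 * Real.sqrt 2 ^ k := hs
        _ ≤ 2 * (Real.sqrt 2 * (Nat.fib (k + 1) : ℝ)) := by nlinarith
        _ = Real.sqrt 2 * (2 * (Nat.fib (k + 1) : ℝ)) := by ring
        _ ≤ Real.sqrt 2 * (Nat.fib (k + 3) : ℝ) := by
            apply mul_le_mul_of_nonneg_left hfib hsqrt

/-- Key analytic estimate. -/
theorem key_estimate (δ L : ℝ) (hδ0 : 0 < δ) (hδ1 : δ < 1)
    (hL1 : 1 < L) (hL2 : L < (2 : ℝ) ^ ((1 - δ) / 2)) :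
    ∃ M : ℕ, ∀ m, M ≤ m → ∀ x : ℝ, (Nat.fib (m + 1) : ℝ) ≤ x →
      2 * Real.log x + 1 ≤ x / L ^ m := by
  set ε := δ / 2 with hεdef
  have hε0 : 0 < ε := by positivity
  have hε1 : ε < 1 := by rw [hεdef]; linarith
  have hb : (1 : ℝ) < (2 : ℝ) ^ (δ / 4) := by
    refine (Real.one_lt_rpow_iff_of_pos (by norm_num)).mpr (Or.inl ⟨by norm_num, by linarith⟩)
  obtain ⟨M, hM⟩ := pow_unbounded_of_one_lt (6 / ε) hb
  refine ⟨M, fun m hm x hx => ?_⟩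
  have hL0 : (0 : ℝ) < L := lt_trans one_pos hL1
  have hLm0 : (0 : ℝ) < L ^ m := pow_pos hL0 m
  have hF1 : (1 : ℝ) ≤ (Nat.fib (m + 1) : ℝ) := by
    exact_mod_cast Nat.fib_pos.mpr m.succ_pos
  have hx1 : (1 : ℝ) ≤ x := hF1.trans hx
  have hx0 : (0 : ℝ) < x := lt_of_lt_of_le one_pos hx1
  have hxε1 : (1 : ℝ) ≤ x ^ ε := by
    calc (1 : ℝ) = 1 ^ ε := (Real.one_rpow ε).symm
      _ ≤ x ^ ε := Real.rpow_le_rpow zero_le_one hx1 hε0.le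
  have hlog : Real.log x ≤ x ^ ε / ε := Real.log_le_rpow_div hx0.le hε0
  have hLm : L ^ m ≤ (2 : ℝ) ^ ((1 - δ) / 2 * (m : ℝ)) := by
    calc L ^ m ≤ ((2 : ℝ) ^ ((1 - δ) / 2)) ^ m := pow_le_pow_left₀ hL0.le hL2.le m
      _ = (2 : ℝ) ^ ((1 - δ) / 2 * (m : ℝ)) := by
          rw [← Real.rpow_natCast ((2 : ℝ) ^ ((1 - δ) / 2)) m,
            ← Real.rpow_mul (by norm_num)]
  have hF2 : (2 : ℝ) ^ ((m : ℝ) / 2 - 1) ≤ (Nat.fib (m + 1) : ℝ) := by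
    have h1 : (2 : ℝ) ^ ((m : ℝ) / 2) = Real.sqrt 2 ^ m := by
      rw [show Real.sqrt 2 = (2 : ℝ) ^ ((1 : ℝ) / 2) from Real.sqrt_eq_rpow 2,
        ← Real.rpow_natCast ((2 : ℝ) ^ ((1 : ℝ) / 2)) m, ← Real.rpow_mul (by norm_num)]
      ring_nf
    have hs2 : Real.sqrt 2 ≤ 2 := by
      nlinarith [Real.sq_sqrt (show (0:ℝ) ≤ 2 by norm_num), Real.sqrt_nonneg 2]
    have h2 : Real.sqrt 2 * (Nat.fib (m + 1) : ℝ) ≤ 2 * (Nat.fib (m + 1) : ℝ) :=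
      mul_le_mul_of_nonneg_right hs2 (by positivity)
    have h3 := (sqrt_two_pow_le_fib m).trans h2
    rw [show (m : ℝ) / 2 - 1 = (m : ℝ) / 2 - (1 : ℝ) from rfl, Real.rpow_sub (by norm_num),
      Real.rpow_one, div_le_iff₀ (by norm_num), h1]
    linarith
  have hM' : 6 / ε ≤ (2 : ℝ) ^ (δ / 4 * (M : ℝ)) := by
    have h := hM.le
    rwa [← Real.rpow_natCast ((2 : ℝ) ^ (δ / 4)) M, ← Real.rpow_mul (by norm_num)] at h
  have hclaim : 3 / ε * L ^ m ≤ x ^ (1 - ε) := by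
    have e1 : (2 : ℝ) ^ (((m : ℝ) / 2 - 1) * (1 - ε)) ≤ x ^ (1 - ε) := by
      calc (2 : ℝ) ^ (((m : ℝ) / 2 - 1) * (1 - ε))
          = ((2 : ℝ) ^ ((m : ℝ) / 2 - 1)) ^ (1 - ε) := by
            rw [← Real.rpow_mul (by norm_num)]
        _ ≤ (Nat.fib (m + 1) : ℝ) ^ (1 - ε) :=
            Real.rpow_le_rpow (by positivity) hF2 (by linarith)
        _ ≤ x ^ (1 - ε) := Real.rpow_le_rpow (by positivity) hx (by linarith)
    have e2 : 3 / ε * L ^ m ≤ 3 / ε * (2 : ℝ) ^ ((1 - δ) / 2 * (m : ℝ)) :=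
      mul_le_mul_of_nonneg_left hLm (by positivity)
    refine e2.trans (le_trans ?_ e1)
    have hexp : δ / 4 * (M : ℝ) ≤
        ((m : ℝ) / 2 - 1) * (1 - ε) - (1 - δ) / 2 * (m : ℝ) + 1 := by
      have hmM : (M : ℝ) ≤ (m : ℝ) := Nat.cast_le.2 hm
      have hid : ((m : ℝ) / 2 - 1) * (1 - ε) - (1 - δ) / 2 * (m : ℝ) + 1
          = (m : ℝ) * δ / 4 + ε := by rw [hεdef]; ring
      rw [hid]
      nlinarith
    have h6 : 6 / ε ≤ (2 : ℝ) ^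
        (((m : ℝ) / 2 - 1) * (1 - ε) - (1 - δ) / 2 * (m : ℝ) + 1) :=
      hM'.trans (Real.rpow_le_rpow_of_exponent_le one_le_two hexp)
    have h7 : (2 : ℝ) ^ (((m : ℝ) / 2 - 1) * (1 - ε) - (1 - δ) / 2 * (m : ℝ) + 1)
        = (2 : ℝ) ^ (((m : ℝ) / 2 - 1) * (1 - ε)) /
          (2 : ℝ) ^ ((1 - δ) / 2 * (m : ℝ)) * 2 := by
      rw [← Real.rpow_sub (by norm_num), ← Real.rpow_add_one (by norm_num)]
    rw [h7] at h6
    have h2pos : (0 : ℝ) < (2 : ℝ) ^ ((1 - δ) / 2 * (m : ℝ)) := by positivity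
    rw [div_mul_eq_mul_div, le_div_iff₀ h2pos] at h6
    have h8 : 6 / ε * (2:ℝ) ^ ((1 - δ) / 2 * (m:ℝ)) = 2 * (3 / ε * (2:ℝ) ^ ((1 - δ) / 2 * (m:ℝ))) := by
      ring
    rw [h8] at h6
    linarith
  have hxsplit : x = x ^ (1 - ε) * x ^ ε := by
    rw [← Real.rpow_add hx0, sub_add_cancel, Real.rpow_one]
  have hmain : 3 / ε * x ^ ε ≤ x / L ^ m := by
    calc 3 / ε * x ^ ε = 3 / ε * L ^ m * x ^ ε / L ^ m := by field_simp
      _ ≤ x ^ (1 - ε) * x ^ ε / L ^ m := by gcongr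
      _ = x / L ^ m := by rw [← hxsplit]
  have hxεε : x ^ ε ≤ x ^ ε / ε := by
    rw [le_div_iff₀ hε0]
    nlinarith
  calc 2 * Real.log x + 1 ≤ 2 * (x ^ ε / ε) + x ^ ε / ε := by
        have : (1 : ℝ) ≤ x ^ ε / ε := hxε1.trans hxεε
        linarith
    _ = 3 / ε * x ^ ε := by field_simp; ring
    _ ≤ x / L ^ m := hmain

end ExcAux

/-- For `0 < δ < 1` and `1 < L < 2^{(1-δ)/2}`, the set of `α ∈ [0,1)` whose continued
fraction convergent denominators `q_m` satisfy `(log q_{m+1})/q_m ≥ L^{-m}` for infinitely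
many `m` has Lebesgue measure zero. -/
theorem exceptional_set_measure_zero (δ L : ℝ) (hδ0 : 0 < δ) (hδ1 : δ < 1)
    (hL1 : 1 < L) (hL2 : L < (2 : ℝ) ^ ((1 - δ) / 2)) :
    MeasureTheory.volume
      {α ∈ Set.Ico (0:ℝ) 1 | Irrational α ∧
        {m : ℕ | (L ^ m)⁻¹ ≤
          Real.log ((GenContFract.of α).dens (m + 1)) / (GenContFract.of α).dens m}.Infinite}
      = 0 := by
  obtain ⟨M, hkey⟩ := ExcAux.key_estimate δ L hδ0 hδ1 hL1 hL2
  refine measure_mono_null ?_ volume_iUnion_setOf_liouvilleWith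
  rintro α ⟨hIco, hirr, hinf⟩
  simp only [Set.mem_iUnion]
  refine ⟨3, by norm_num, ?_⟩
  show LiouvilleWith 3 α
  have hL0 : (0 : ℝ) < L := lt_trans one_pos hL1
  have hterm : ∀ k, ¬(GenContFract.of α).TerminatedAt k := by
    intro k hk
    obtain ⟨q, hq⟩ := (GenContFract.terminates_iff_rat α).mp ⟨k, hk⟩
    exact hirr ⟨q, hq.symm⟩
  have hfib : ∀ k, (Nat.fib (k + 1) : ℝ) ≤ (GenContFract.of α).dens k := fun k =>
    GenContFract.succ_nth_fib_le_of_nth_den (Or.inr (hterm _))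
  refine ⟨1, ?_⟩
  rw [Filter.frequently_atTop]
  intro N
  obtain ⟨m, hmS, hmgt⟩ := hinf.exists_gt (max M (max N 4))
  have hmM : M ≤ m := le_of_lt (lt_of_le_of_lt (le_max_left _ _) hmgt)
  have hmN : N ≤ m := le_of_lt (lt_of_le_of_lt ((le_max_left _ _).trans (le_max_right _ _)) hmgt)
  have hm4 : 4 < m := lt_of_le_of_lt ((le_max_right _ _).trans (le_max_right _ _)) hmgt
  set q := (GenContFract.of α).dens m with hqdef
  set q' := (GenContFract.of α).dens (m + 1) with hq'def
  have hfib1 : (1 : ℝ) ≤ (Nat.fib (m + 1) : ℝ) := by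
    exact_mod_cast Nat.fib_pos.mpr m.succ_pos
  have hfib1' : (1 : ℝ) ≤ (Nat.fib (m + 2) : ℝ) := by
    exact_mod_cast Nat.fib_pos.mpr (m + 1).succ_pos
  have hq1 : (1 : ℝ) ≤ q := le_trans hfib1 (hfib m)
  have hq'1 : (1 : ℝ) ≤ q' := le_trans hfib1' (hfib (m + 1))
  have hq0 : (0 : ℝ) < q := lt_of_lt_of_le one_pos hq1
  have hq'0 : (0 : ℝ) < q' := lt_of_lt_of_le one_pos hq'1
  have hLm0 : (0 : ℝ) < L ^ m := pow_pos hL0 m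
  have hcond : (L ^ m)⁻¹ ≤ Real.log q' / q := hmS
  have hlogq' : q / L ^ m ≤ Real.log q' := by
    rw [le_div_iff₀ hq0] at hcond
    rw [div_eq_mul_inv, mul_comm]
    exact hcond
  have hlog2 : 2 * Real.log q + 1 ≤ Real.log q' :=
    le_trans (hkey m hmM q (hfib m)) hlogq'
  have hq'big : Real.exp 1 * q ^ 2 ≤ q' := by
    have h1 : Real.exp (2 * Real.log q + 1) ≤ q' := by
      have h2 := Real.exp_le_exp.mpr hlog2
      rwa [Real.exp_log hq'0] at h2
    calc Real.exp 1 * q ^ 2 = Real.exp (2 * Real.log q + 1) := by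
          rw [show 2 * Real.log q = Real.log (q ^ 2) by
              rw [Real.log_pow]; push_cast; ring,
            Real.exp_add, Real.exp_log (by positivity), mul_comm]
      _ ≤ q' := h1
  have happrox := GenContFract.abs_sub_convs_le (hterm m)
  obtain ⟨⟨a, b⟩, hpair⟩ := ExcAux.exists_int_pair_contsAux α (m + 1)
  have hnum : (GenContFract.of α).nums m = (a : ℝ) := by
    rw [GenContFract.num_eq_conts_a, GenContFract.nth_cont_eq_succ_nth_contAux, hpair]; rfl
  have hden : q = (b : ℝ) := by
    rw [hqdef, GenContFract.den_eq_conts_b, GenContFract.nth_cont_eq_succ_nth_contAux, hpair]; rfl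
  have hb0 : (0 : ℤ) ≤ b := by
    have : (0 : ℝ) ≤ (b : ℝ) := by rw [← hden]; exact hq0.le
    exact_mod_cast this
  set n := b.toNat with hndef
  have hbn : ((n : ℕ) : ℝ) = q := by
    rw [hden]
    exact_mod_cast congrArg (Int.cast : ℤ → ℝ) (Int.toNat_of_nonneg hb0)
  have hnN : N ≤ n := by
    have h5 : 5 ≤ m + 1 := by omega
    have hfibm : (m + 1 : ℕ) ≤ Nat.fib (m + 1) := Nat.le_fib_self h5
    have : (N : ℝ) ≤ (n : ℝ) := by
      rw [hbn]
      calc (N : ℝ) ≤ ((m + 1 : ℕ) : ℝ) := by exact_mod_cast Nat.le_succ_of_le hmN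
        _ ≤ (Nat.fib (m + 1) : ℝ) := by exact_mod_cast hfibm
        _ ≤ q := hfib m
    exact_mod_cast this
  refine ⟨n, hnN, a, ?_, ?_⟩
  · intro h
    refine hirr ⟨(a : ℚ) / (n : ℚ), ?_⟩
    rw [h]
    push_cast
    ring
  · have hconv : (GenContFract.of α).convs m = (a : ℝ) / (n : ℝ) := by
      rw [GenContFract.conv_eq_num_div_den, hnum, ← hqdef, ← hbn]
    have he : (2 : ℝ) ≤ Real.exp 1 := by
      have := Real.add_one_le_exp (1 : ℝ)
      linarith
    have h3 : ((n : ℕ) : ℝ) ^ (3 : ℝ) = q ^ (3 : ℕ) := by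
      rw [show (3 : ℝ) = ((3 : ℕ) : ℝ) by norm_num, Real.rpow_natCast, hbn]
    calc |α - (a : ℝ) / (n : ℝ)| = |α - (GenContFract.of α).convs m| := by rw [hconv]
      _ ≤ 1 / (q * q') := happrox
      _ < 1 / ((n : ℕ) : ℝ) ^ (3 : ℝ) := by
          rw [h3]
          apply div_lt_div_of_pos_left one_pos (by positivity)
          nlinarith [mul_le_mul_of_nonneg_left hq'big hq0.le, pow_pos hq0 3, he]
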